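/- arXiv:2102.07702 — 2 statements merged into one kernel-verified Lean document; each statement's English description precedes it below -/
import Mathlib

section
/- If a tax policy T ∈ 𝒯 is locally optimal — i.e. there is a neighborhood N of T such that every T̃ ∈ N with R(T̃) = R(T) satisfies W^g_T(T) ≥ W^g_T(T̃) — then T is locally Pareto optimal: there is a neighborhood N′ of T such that for every T̃ ∈ N′ with R(T) = R(T̃), if the set of agents i with U_i(T̃) > U_i(T) has positive Lebesgue measure, then the set of agents i with U_i(T) > U_i(T̃) also has positive Lebesgue measure. -/
open Set MeasureTheory

noncomputable section

namespace Stmt2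

abbrev Chars (n : ℕ) := EuclideanSpace ℝ (Fin n)

/-- Membership in the set `𝒯` of tax policies. -/
def IsTaxPolicy {n : ℕ} (zbar : ℝ) (X : Set (Chars n)) (T : ℝ → Chars n → ℝ) : Prop :=
  ContinuousOn (fun p : ℝ × Chars n => T p.1 p.2) (Icc 0 zbar ×ˢ X) ∧
  (∀ x ∈ X, ∀ z ∈ Icc (0:ℝ) zbar, DifferentiableAt ℝ (fun w => T w x) z) ∧
  (∀ x ∈ X, ∀ z ∈ Icc (0:ℝ) zbar, DifferentiableAt ℝ (deriv fun w => T w x) z) ∧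
  ContinuousOn (fun p : ℝ × Chars n => deriv (fun w => T w p.2) p.1) (Icc 0 zbar ×ˢ X) ∧
  ContinuousOn (fun p : ℝ × Chars n => deriv (deriv fun w => T w p.2) p.1) (Icc 0 zbar ×ˢ X)

/-- `T` and `T'` are within `δ` in the norm `p(T) = max (|T| + |∂_z T| + |∂²_z T|)`. -/
def PClose {n : ℕ} (zbar : ℝ) (X : Set (Chars n)) (T T' : ℝ → Chars n → ℝ) (δ : ℝ) : Prop :=
  ∀ z ∈ Icc (0:ℝ) zbar, ∀ x ∈ X,
    |T z x - T' z x| + |deriv (fun w => T w x) z - deriv (fun w => T' w x) z| +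
      |deriv (deriv fun w => T w x) z - deriv (deriv fun w => T' w x) z| < δ

/-- `Ũ_i(T)`: agent `i`'s indirect utility in dollar terms. -/
def Util {n m : ℕ} (v : ℝ → Chars n → Chars m → ℝ) (x : ℝ → Chars n) (y : ℝ → Chars m)
    (zopt : (ℝ → Chars n → ℝ) → ℝ → ℝ) (T : ℝ → Chars n → ℝ) (i : ℝ) : ℝ :=
  zopt T i - T (zopt T i) (x i) - v (zopt T i) (x i) (y i)

/-- `g_i(T)`: agent `i`'s generalized social marginal welfare weight at `T`. -/
def gWt {n m : ℕ} (g : ℝ → ℝ → Chars n → Chars m → ℝ) (x : ℝ → Chars n) (y : ℝ → Chars m)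
    (zopt : (ℝ → Chars n → ℝ) → ℝ → ℝ) (T : ℝ → Chars n → ℝ) (i : ℝ) : ℝ :=
  g (zopt T i - T (zopt T i) (x i)) (zopt T i) (x i) (y i)

/-- The local social welfare function `W^g_{T̃}(T) = ∫₀¹ g_i(T̃) Ũ_i(T) di`. -/
def Wloc {n m : ℕ} (g : ℝ → ℝ → Chars n → Chars m → ℝ) (v : ℝ → Chars n → Chars m → ℝ)
    (x : ℝ → Chars n) (y : ℝ → Chars m) (zopt : (ℝ → Chars n → ℝ) → ℝ → ℝ)
    (Ttil T : ℝ → Chars n → ℝ) : ℝ :=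
  ∫ i in (0:ℝ)..1, gWt g x y zopt Ttil i * Util v x y zopt T i

/-- Revenue `R(T) = ∫₀¹ T_i(z_i(T)) di`. -/
def Rev {n : ℕ} (x : ℝ → Chars n) (zopt : (ℝ → Chars n → ℝ) → ℝ → ℝ)
    (T : ℝ → Chars n → ℝ) : ℝ :=
  ∫ i in (0:ℝ)..1, T (zopt T i) (x i)

/-- **Proposition (Sher 2021, Proposition `Pareto proposition`).** If a tax policy `T ∈ 𝒯`
is locally optimal, then `T` is locally Pareto optimal. -/
theorem stmt2 {n m : ℕ} (zbar : ℝ) (hzbar : 0 < zbar)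
    (X : Set (Chars n)) (Y : Set (Chars m)) (hX : IsCompact X) (hY : IsCompact Y)
    (x : ℝ → Chars n) (y : ℝ → Chars m)
    (hx : {i : ℝ | ¬ ContinuousAt x i}.Finite) (hy : {i : ℝ | ¬ ContinuousAt y i}.Finite)
    (u : ℝ → ℝ) (hu_mono : StrictMono u) (hu_conc : ConcaveOn ℝ univ u)
    (hu_smooth : ContDiff ℝ 2 u)
    (v : ℝ → Chars n → Chars m → ℝ)
    (hv_cont : ContinuousOn (fun p : ℝ × Chars n × Chars m => v p.1 p.2.1 p.2.2)
      (Icc 0 zbar ×ˢ X ×ˢ Y))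
    (hv_mono : ∀ a ∈ X, ∀ b ∈ Y, StrictMonoOn (fun z => v z a b) (Icc 0 zbar))
    (hv_d1 : ∀ a ∈ X, ∀ b ∈ Y, ∀ z ∈ Icc (0:ℝ) zbar, DifferentiableAt ℝ (fun w => v w a b) z)
    (hv_d2 : ∀ a ∈ X, ∀ b ∈ Y, ∀ z ∈ Icc (0:ℝ) zbar,
      DifferentiableAt ℝ (deriv fun w => v w a b) z)
    (hv_c1 : ContinuousOn (fun p : ℝ × Chars n × Chars m =>
      deriv (fun w => v w p.2.1 p.2.2) p.1) (Icc 0 zbar ×ˢ X ×ˢ Y))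
    (hv_c2 : ContinuousOn (fun p : ℝ × Chars n × Chars m =>
      deriv (deriv fun w => v w p.2.1 p.2.2) p.1) (Icc 0 zbar ×ˢ X ×ˢ Y))
    (hv_bar : ∀ i : ℝ, 1 < deriv (fun w => v w (x i) (y i)) zbar)
    (zopt : (ℝ → Chars n → ℝ) → ℝ → ℝ)
    (hzopt_max : ∀ T, IsTaxPolicy zbar X T → ∀ i : ℝ, zopt T i ∈ Icc (0:ℝ) zbar ∧
      IsMaxOn (fun z => z - T z (x i) - v z (x i) (y i)) (Icc 0 zbar) (zopt T i))
    (hzopt_unique : ∀ T, IsTaxPolicy zbar X T →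
      ∀ᵐ i ∂(volume.restrict (Icc (0:ℝ) 1)), ∀ z ∈ Icc (0:ℝ) zbar,
        IsMaxOn (fun w => w - T w (x i) - v w (x i) (y i)) (Icc 0 zbar) z → z = zopt T i)
    (g : ℝ → ℝ → Chars n → Chars m → ℝ)
    (hg_pos : ∀ c z a b, 0 < g c z a b)
    (hg_int : ∀ T T', IsTaxPolicy zbar X T → IsTaxPolicy zbar X T' →
      IntervalIntegrable (fun i => gWt g x y zopt T i * Util v x y zopt T' i) volume 0 1)
    -- the tax policy under consideration
    (T : ℝ → Chars n → ℝ) (hT : IsTaxPolicy zbar X T)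
    -- `T` is locally optimal
    (hopt : ∃ δ > 0, ∀ Ttil, IsTaxPolicy zbar X Ttil → PClose zbar X T Ttil δ →
      Rev x zopt Ttil = Rev x zopt T →
      Wloc g v x y zopt T Ttil ≤ Wloc g v x y zopt T T) :
    -- `T` is locally Pareto optimal
    ∃ δ > 0, ∀ Ttil, IsTaxPolicy zbar X Ttil → PClose zbar X T Ttil δ →
      Rev x zopt T = Rev x zopt Ttil →
      0 < volume {i : ℝ | i ∈ Icc (0:ℝ) 1 ∧
        u (Util v x y zopt T i) < u (Util v x y zopt Ttil i)} →
      0 < volume {i : ℝ | i ∈ Icc (0:ℝ) 1 ∧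
        u (Util v x y zopt Ttil i) < u (Util v x y zopt T i)} := by
  obtain ⟨δ, hδ, hW⟩ := hopt
  refine ⟨δ, hδ, fun Ttil hTt hclose hRev hpos => ?_⟩
  by_contra hzero
  push_neg at hzero
  have hB : volume {i : ℝ | i ∈ Icc (0:ℝ) 1 ∧
      Util v x y zopt Ttil i < Util v x y zopt T i} = 0 := by
    have := le_antisymm hzero zero_le
    simpa [hu_mono.lt_iff_lt] using this
  have hA : 0 < volume {i : ℝ | i ∈ Icc (0:ℝ) 1 ∧
      Util v x y zopt T i < Util v x y zopt Ttil i} := by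
    simpa [hu_mono.lt_iff_lt] using hpos
  set f : ℝ → ℝ := fun i => gWt g x y zopt T i * Util v x y zopt T i with hf
  set F : ℝ → ℝ := fun i => gWt g x y zopt T i * Util v x y zopt Ttil i with hF
  set μ : Measure ℝ := volume.restrict (Ioc (0:ℝ) 1) with hμ
  have hle01 : (0:ℝ) ≤ 1 := zero_le_one
  have hfint : Integrable f μ := by
    have := hg_int T T hT hT
    rwa [intervalIntegrable_iff_integrableOn_Ioc_of_le hle01] at this
  have hFint : Integrable F μ := by
    have := hg_int T Ttil hT hTt
    rwa [intervalIntegrable_iff_integrableOn_Ioc_of_le hle01] at this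
  -- a.e. nonnegativity of F - f
  have hae : 0 ≤ᵐ[μ] fun i => F i - f i := by
    have hBμ : μ {i : ℝ | i ∈ Icc (0:ℝ) 1 ∧
        Util v x y zopt Ttil i < Util v x y zopt T i} = 0 :=
      le_antisymm (le_trans (Measure.restrict_le_self _) hB.le) zero_le
    have h1 : ∀ᵐ i ∂μ, i ∉ {i : ℝ | i ∈ Icc (0:ℝ) 1 ∧
        Util v x y zopt Ttil i < Util v x y zopt T i} :=
      (measure_eq_zero_iff_ae_notMem.mp hBμ)
    have h2 : ∀ᵐ i ∂μ, i ∈ Ioc (0:ℝ) 1 := ae_restrict_mem measurableSet_Ioc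
    filter_upwards [h1, h2] with i hi hii
    have hiIcc : i ∈ Icc (0:ℝ) 1 := Ioc_subset_Icc_self hii
    have hle : Util v x y zopt T i ≤ Util v x y zopt Ttil i := by
      by_contra hlt
      exact hi ⟨hiIcc, lt_of_not_ge hlt⟩
    have hgpos : 0 < gWt g x y zopt T i := hg_pos _ _ _ _
    have : f i ≤ F i := by
      simp only [hf, hF]
      exact mul_le_mul_of_nonneg_left hle hgpos.le
    simpa using sub_nonneg.mpr this
  -- the support of F - f has positive measure
  have hsupp : 0 < μ (Function.support fun i => F i - f i) := by
    have hsub : {i : ℝ | i ∈ Icc (0:ℝ) 1 ∧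
        Util v x y zopt T i < Util v x y zopt Ttil i} \ {0} ⊆
        (Function.support fun i => F i - f i) ∩ Ioc (0:ℝ) 1 := by
      rintro i ⟨⟨hiIcc, hlt⟩, hi0⟩
      constructor
      · have hgpos : 0 < gWt g x y zopt T i := hg_pos _ _ _ _
        have : f i < F i := by
          simp only [hf, hF]
          exact mul_lt_mul_of_pos_left hlt hgpos
        exact ne_of_gt (sub_pos.mpr this)
      · exact ⟨lt_of_le_of_ne hiIcc.1 (Ne.symm (by simpa using hi0)), hiIcc.2⟩
    have hAd : 0 < volume ({i : ℝ | i ∈ Icc (0:ℝ) 1 ∧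
        Util v x y zopt T i < Util v x y zopt Ttil i} \ {0}) := by
      rwa [measure_diff_null (by simp)]
    have : 0 < volume ((Function.support fun i => F i - f i) ∩ Ioc (0:ℝ) 1) :=
      lt_of_lt_of_le hAd (measure_mono hsub)
    rwa [hμ, Measure.restrict_apply' measurableSet_Ioc]
  have hdiffpos : 0 < ∫ i, (F i - f i) ∂μ :=
    (integral_pos_iff_support_of_nonneg_ae hae (hFint.sub hfint)).mpr hsupp
  have hlt : ∫ i, f i ∂μ < ∫ i, F i ∂μ := by
    have := integral_sub hFint hfint
    linarith [hdiffpos, this ▸ hdiffpos]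
  have hWlt : Wloc g v x y zopt T T < Wloc g v x y zopt T Ttil := by
    unfold Wloc
    rw [intervalIntegral.integral_of_le hle01, intervalIntegral.integral_of_le hle01]
    exact hlt
  exact absurd (hW Ttil hTt hclose hRev.symm) (not_le.mpr hWlt)

end Stmt2
end
end

section
/- In the three-region example — three observable types (East Coast for i ∈ [0,1/3), Interior for i ∈ [1/3,2/3], West Coast for i ∈ (2/3,1]), common cost of income v(z) = z²/2, quasilinear utility c − v(z), taxes allowed to condition on income and observable type, and libertarian welfare weights identical across agents, g_i(c,z) = g(z − c) with g positive and strictly increasing — there does not exist a preorder that rationalizes g; moreover, any binary relation that rationalizes g contains a cycle of the form T₀ ≺ T₁ ∼ T₂ ≺ T₃ ∼ T₀ among four tax policies all raising the same revenue. -/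
open Set MeasureTheory

noncomputable section

namespace Stmt5

/-- The observable region of agent `i ∈ [0,1]`: East Coast (`0`) for `i ∈ [0,1/3)`,
Interior (`1`) for `i ∈ [1/3,2/3]`, West Coast (`2`) for `i ∈ (2/3,1]`. -/
def reg (i : ℝ) : Fin 3 := if i < 1/3 then 0 else if i ≤ 2/3 then 1 else 2

/-- Agent `i`'s objective under tax policy `T`, with cost of income `v(z) = z²/2`. -/
def obj (T : ℝ → Fin 3 → ℝ) (i : ℝ) (z : ℝ) : ℝ := z - T z (reg i) - z^2 / 2

/-- Revenue `R(T) = ∫₀¹ T_i(z_i(T)) di`. -/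
def Rev (zopt : (ℝ → Fin 3 → ℝ) → ℝ → ℝ) (T : ℝ → Fin 3 → ℝ) : ℝ :=
  ∫ i in (0:ℝ)..1, T (zopt T i) (reg i)

/-- Libertarian welfare weight of agent `i` at tax policy `T`: `g` of the tax paid. -/
def gWt (g : ℝ → ℝ) (zopt : (ℝ → Fin 3 → ℝ) → ℝ → ℝ) (T : ℝ → Fin 3 → ℝ) (i : ℝ) : ℝ :=
  g (T (zopt T i) (reg i))

/-- A smooth constant-revenue path of tax policies. -/
def IsPath (zopt : (ℝ → Fin 3 → ℝ) → ℝ → ℝ) (a b : ℝ) (ρ : ℝ → ℝ → Fin 3 → ℝ) : Prop :=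
  a < 0 ∧ 1 < b ∧
  (∀ r : Fin 3, ContDiff ℝ 1 (fun p : ℝ × ℝ => ρ p.2 p.1 r)) ∧
  (∀ θ ∈ Icc a b,
    {i₀ : ℝ | ∃ z, ¬ ContinuousAt (fun i => deriv (fun θ' => ρ θ' z (reg i)) θ) i₀}.Finite) ∧
  (∀ θ ∈ Icc a b, Rev zopt (ρ θ) = Rev zopt (ρ 0))

/-- `rel` rationalizes `g`: local improvement and indifference principles along every
smooth constant-revenue path. -/
def Rationalizes (g : ℝ → ℝ) (zopt : (ℝ → Fin 3 → ℝ) → ℝ → ℝ)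
    (rel : (ℝ → Fin 3 → ℝ) → (ℝ → Fin 3 → ℝ) → Prop) : Prop :=
  ∀ a b : ℝ, ∀ ρ : ℝ → ℝ → Fin 3 → ℝ, IsPath zopt a b ρ →
    (((∫ i in (0:ℝ)..1,
        gWt g zopt (ρ 0) i * deriv (fun θ => ρ θ (zopt (ρ 0) i) (reg i)) 0) < 0 →
      ∃ θb ∈ Ioc (0:ℝ) 1, ∀ θ ∈ Ioo 0 θb, rel (ρ 0) (ρ θ) ∧ ¬ rel (ρ θ) (ρ 0)) ∧
    (0 < (∫ i in (0:ℝ)..1,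
        gWt g zopt (ρ 0) i * deriv (fun θ => ρ θ (zopt (ρ 0) i) (reg i)) 0) →
      ∃ θb ∈ Ioc (0:ℝ) 1, ∀ θ ∈ Ioo 0 θb, rel (ρ θ) (ρ 0) ∧ ¬ rel (ρ 0) (ρ θ))) ∧
    ((∀ θ' ∈ Icc (0:ℝ) 1, (∫ i in (0:ℝ)..1,
        gWt g zopt (ρ θ') i * deriv (fun θ => ρ θ (zopt (ρ θ') i) (reg i)) θ') = 0) →
      rel (ρ 0) (ρ 1) ∧ rel (ρ 1) (ρ 0))

/-! ### Auxiliary development -/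

/-- The basic family of tax policies used in all our paths: a quadratic "valley"
schedule for each region, with utility level `V r` and optimal income `Z r`. -/
def TP (V Z : Fin 3 → ℝ) : ℝ → Fin 3 → ℝ := fun z r => (z - z^2/2) - V r + (z - Z r)^2

lemma obj_TP (V Z : Fin 3 → ℝ) (i z : ℝ) :
    obj (TP V Z) i z = V (reg i) - (z - Z (reg i))^2 := by
  simp only [obj, TP]; ring

lemma isMaxOn_TP (V Z : Fin 3 → ℝ) (i : ℝ) :
    IsMaxOn (obj (TP V Z) i) univ (Z (reg i)) := by
  intro x _
  simp only [mem_setOf_eq, obj_TP]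
  nlinarith [sq_nonneg (x - Z (reg i))]

lemma eq_of_isMaxOn_TP (V Z : Fin 3 → ℝ) (i : ℝ) {y : ℝ}
    (hy : IsMaxOn (obj (TP V Z) i) univ y) : y = Z (reg i) := by
  have h := hy (mem_univ (Z (reg i)))
  simp only [mem_setOf_eq, obj_TP] at h
  nlinarith [sq_nonneg (y - Z (reg i))]

lemma existsUnique_TP (V Z : Fin 3 → ℝ) (i : ℝ) :
    ∃! z : ℝ, IsMaxOn (obj (TP V Z) i) univ z :=
  ⟨Z (reg i), isMaxOn_TP V Z i, fun _ hy => eq_of_isMaxOn_TP V Z i hy⟩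

lemma zopt_TP (zopt : (ℝ → Fin 3 → ℝ) → ℝ → ℝ)
    (hzopt : ∀ T : ℝ → Fin 3 → ℝ, ∀ i : ℝ,
      (∃! z : ℝ, IsMaxOn (obj T i) univ z) → IsMaxOn (obj T i) univ (zopt T i))
    (V Z : Fin 3 → ℝ) (i : ℝ) : zopt (TP V Z) i = Z (reg i) :=
  eq_of_isMaxOn_TP V Z i (hzopt _ i (existsUnique_TP V Z i))

lemma ae_ne (c : ℝ) : ∀ᵐ i : ℝ, i ≠ c := by
  rw [MeasureTheory.ae_iff]
  have : {a : ℝ | ¬ a ≠ c} = {c} := by ext x; simp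
  rw [this]
  exact Real.volume_singleton

lemma reg_eq_zero {i : ℝ} (h : i < 1/3) : reg i = 0 := if_pos h

lemma reg_eq_one {i : ℝ} (h1 : 1/3 ≤ i) (h2 : i ≤ 2/3) : reg i = 1 := by
  rw [reg, if_neg (not_lt.mpr h1), if_pos h2]

lemma reg_eq_two {i : ℝ} (h : 2/3 < i) : reg i = 2 := by
  rw [reg, if_neg (by linarith), if_neg (by linarith)]

lemma integrable_reg (f : Fin 3 → ℝ) (a b : ℝ) :
    IntervalIntegrable (fun i => f (reg i)) volume a b := by
  apply IntervalIntegrable.mono_fun' (g := fun _ => |f 0| + |f 1| + |f 2|)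
    (intervalIntegrable_const)
  · have hm : Measurable fun i : ℝ => f (reg i) := by
      unfold reg
      simp only [apply_ite f]
      exact Measurable.ite (measurableSet_lt measurable_id measurable_const)
        measurable_const
        (Measurable.ite (measurableSet_le measurable_id measurable_const)
          measurable_const measurable_const)
    exact hm.aestronglyMeasurable
  · filter_upwards with i
    rcases (show reg i = 0 ∨ reg i = 1 ∨ reg i = 2 by omega) with h | h | h <;>
      rw [Real.norm_eq_abs, h] <;>
      linarith [abs_nonneg (f 0), abs_nonneg (f 1), abs_nonneg (f 2),
        le_abs_self (f 0), le_abs_self (f 1), le_abs_self (f 2)]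

/-- The integral over `[0,1]` of a function of the region. -/
lemma integral_reg (f : Fin 3 → ℝ) :
    ∫ i in (0:ℝ)..1, f (reg i) = (f 0 + f 1 + f 2)/3 := by
  have I1 : IntervalIntegrable (fun i => f (reg i)) volume 0 (1/3) := integrable_reg f _ _
  have I2 : IntervalIntegrable (fun i => f (reg i)) volume (1/3) (2/3) := integrable_reg f _ _
  have I3 : IntervalIntegrable (fun i => f (reg i)) volume (2/3) 1 := integrable_reg f _ _
  have e1 : ∫ i in (0:ℝ)..(1/3), f (reg i) = ∫ _ in (0:ℝ)..(1/3), f 0 := by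
    apply intervalIntegral.integral_congr_ae
    filter_upwards [ae_ne (1/3 : ℝ)] with i hi hmem
    rw [Set.uIoc_of_le (by norm_num : (0:ℝ) ≤ 1/3)] at hmem
    rw [reg_eq_zero (lt_of_le_of_ne hmem.2 hi)]
  have e2 : ∫ i in (1/3:ℝ)..(2/3), f (reg i) = ∫ _ in (1/3:ℝ)..(2/3), f 1 := by
    apply intervalIntegral.integral_congr_ae
    filter_upwards with i hmem
    rw [Set.uIoc_of_le (by norm_num : (1/3:ℝ) ≤ 2/3)] at hmem
    rw [reg_eq_one (le_of_lt hmem.1) hmem.2]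
  have e3 : ∫ i in (2/3:ℝ)..1, f (reg i) = ∫ _ in (2/3:ℝ)..1, f 2 := by
    apply intervalIntegral.integral_congr_ae
    filter_upwards with i hmem
    rw [Set.uIoc_of_le (by norm_num : (2/3:ℝ) ≤ 1)] at hmem
    rw [reg_eq_two hmem.1]
  have s1 := intervalIntegral.integral_add_adjacent_intervals I1 (I2.trans I3)
  have s2 := intervalIntegral.integral_add_adjacent_intervals I2 I3
  rw [← s1, ← s2, e1, e2, e3]
  simp [intervalIntegral.integral_const]
  ring

lemma deriv_TP (𝕍 𝕫 : ℝ → Fin 3 → ℝ) (r : Fin 3) (θ' : ℝ) (V' : ℝ)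
    (hV : HasDerivAt (fun θ => 𝕍 θ r) V' θ')
    (hZ : DifferentiableAt ℝ (fun θ => 𝕫 θ r) θ') :
    deriv (fun θ => TP (𝕍 θ) (𝕫 θ) (𝕫 θ' r) r) θ' = -V' := by
  have h : HasDerivAt (fun θ => TP (𝕍 θ) (𝕫 θ) (𝕫 θ' r) r)
      ((0 - V') + (2 * ((𝕫 θ' r) - 𝕫 θ' r) ^ 1 * (0 - deriv (fun θ => 𝕫 θ r) θ'))) θ' := by
    simp only [TP]
    exact ((hasDerivAt_const θ' _).sub hV).add
      (((hasDerivAt_const θ' (𝕫 θ' r)).sub hZ.hasDerivAt).pow 2)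
  rw [h.deriv]
  simp

/-- Evaluation of the marginal-welfare integral along a `TP` path. -/
lemma INT (zopt : (ℝ → Fin 3 → ℝ) → ℝ → ℝ)
    (hzopt : ∀ T : ℝ → Fin 3 → ℝ, ∀ i : ℝ,
      (∃! z : ℝ, IsMaxOn (obj T i) univ z) → IsMaxOn (obj T i) univ (zopt T i))
    (g : ℝ → ℝ) (𝕍 𝕫 : ℝ → Fin 3 → ℝ) (θ' : ℝ) (V' : Fin 3 → ℝ)
    (hV : ∀ r, HasDerivAt (fun θ => 𝕍 θ r) (V' r) θ')
    (hz : ∀ r, DifferentiableAt ℝ (fun θ => 𝕫 θ r) θ') :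
    (∫ i in (0:ℝ)..1, gWt g zopt (TP (𝕍 θ') (𝕫 θ')) i *
        deriv (fun θ => TP (𝕍 θ) (𝕫 θ) (zopt (TP (𝕍 θ') (𝕫 θ')) i) (reg i)) θ')
      = (g (TP (𝕍 θ') (𝕫 θ') (𝕫 θ' 0) 0) * (-(V' 0))
        + g (TP (𝕍 θ') (𝕫 θ') (𝕫 θ' 1) 1) * (-(V' 1))
        + g (TP (𝕍 θ') (𝕫 θ') (𝕫 θ' 2) 2) * (-(V' 2)))/3 := by
  have key : ∀ i : ℝ, gWt g zopt (TP (𝕍 θ') (𝕫 θ')) i *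
        deriv (fun θ => TP (𝕍 θ) (𝕫 θ) (zopt (TP (𝕍 θ') (𝕫 θ')) i) (reg i)) θ'
      = (fun r => g (TP (𝕍 θ') (𝕫 θ') (𝕫 θ' r) r) * (-(V' r))) (reg i) := by
    intro i
    rw [gWt, zopt_TP zopt hzopt, deriv_TP 𝕍 𝕫 (reg i) θ' (V' (reg i)) (hV _) (hz _)]
  rw [intervalIntegral.integral_congr (g := fun i =>
      (fun r => g (TP (𝕍 θ') (𝕫 θ') (𝕫 θ' r) r) * (-(V' r))) (reg i)) (fun i _ => key i)]
  simpa using integral_reg (fun r => g (TP (𝕍 θ') (𝕫 θ') (𝕫 θ' r) r) * (-(V' r)))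

lemma Rev_TP (zopt : (ℝ → Fin 3 → ℝ) → ℝ → ℝ)
    (hzopt : ∀ T : ℝ → Fin 3 → ℝ, ∀ i : ℝ,
      (∃! z : ℝ, IsMaxOn (obj T i) univ z) → IsMaxOn (obj T i) univ (zopt T i))
    (V Z : Fin 3 → ℝ) :
    Rev zopt (TP V Z) = (TP V Z (Z 0) 0 + TP V Z (Z 1) 1 + TP V Z (Z 2) 2)/3 := by
  rw [Rev, intervalIntegral.integral_congr
    (g := fun i => (fun r => TP V Z (Z r) r) (reg i))
    (fun i _ => by rw [zopt_TP zopt hzopt])]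
  simpa using integral_reg (fun r => TP V Z (Z r) r)

lemma reg_eventually_const {i₀ : ℝ} (h1 : i₀ ≠ 1/3) (h2 : i₀ ≠ 2/3) :
    ∀ᶠ i in nhds i₀, reg i = reg i₀ := by
  rcases lt_trichotomy i₀ (1/3 : ℝ) with h | h | h
  · filter_upwards [Iio_mem_nhds h] with i hi
    rw [reg_eq_zero hi, reg_eq_zero h]
  · exact absurd h h1
  · rcases lt_trichotomy i₀ (2/3 : ℝ) with h' | h' | h'
    · filter_upwards [Ioo_mem_nhds h h'] with i hi
      rw [reg_eq_one (le_of_lt hi.1) (le_of_lt hi.2), reg_eq_one (le_of_lt h) (le_of_lt h')]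
    · exact absurd h' h2
    · filter_upwards [Ioi_mem_nhds h'] with i hi
      rw [reg_eq_two hi, reg_eq_two h']

lemma finite_bad (ρ : ℝ → ℝ → Fin 3 → ℝ) (θ : ℝ) :
    {i₀ : ℝ | ∃ z, ¬ ContinuousAt (fun i => deriv (fun θ' => ρ θ' z (reg i)) θ) i₀}.Finite := by
  apply Set.Finite.subset (Set.Finite.insert (1/3 : ℝ) (Set.finite_singleton (2/3 : ℝ)))
  intro i₀ hi₀
  by_contra hmem
  simp only [Set.mem_insert_iff, Set.mem_singleton_iff, not_or] at hmem
  obtain ⟨z, hz⟩ := hi₀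
  apply hz
  apply Filter.EventuallyEq.continuousAt (y := deriv (fun θ' => ρ θ' z (reg i₀)) θ)
  filter_upwards [reg_eventually_const hmem.1 hmem.2] with i hi
  rw [hi]

/-- Generic construction of constant-revenue paths through the `TP` family. -/
lemma isPath_TP (zopt : (ℝ → Fin 3 → ℝ) → ℝ → ℝ)
    (hzopt : ∀ T : ℝ → Fin 3 → ℝ, ∀ i : ℝ,
      (∃! z : ℝ, IsMaxOn (obj T i) univ z) → IsMaxOn (obj T i) univ (zopt T i))
    (𝕍 𝕫 : ℝ → Fin 3 → ℝ)
    (h𝕍 : ∀ r, ContDiff ℝ 1 (fun θ => 𝕍 θ r))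
    (h𝕫 : ∀ r, ContDiff ℝ 1 (fun θ => 𝕫 θ r))
    (hsum : ∀ θ, TP (𝕍 θ) (𝕫 θ) (𝕫 θ 0) 0 + TP (𝕍 θ) (𝕫 θ) (𝕫 θ 1) 1
        + TP (𝕍 θ) (𝕫 θ) (𝕫 θ 2) 2
      = TP (𝕍 0) (𝕫 0) (𝕫 0 0) 0 + TP (𝕍 0) (𝕫 0) (𝕫 0 1) 1 + TP (𝕍 0) (𝕫 0) (𝕫 0 2) 2) :
    IsPath zopt (-1) 2 (fun θ => TP (𝕍 θ) (𝕫 θ)) := by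
  refine ⟨by norm_num, by norm_num, ?_, fun θ _ => finite_bad _ θ, fun θ _ => ?_⟩
  · intro r
    have : (fun p : ℝ × ℝ => TP (𝕍 p.2) (𝕫 p.2) p.1 r)
        = fun p : ℝ × ℝ => (p.1 - p.1^2/2) - 𝕍 p.2 r + (p.1 - 𝕫 p.2 r)^2 := rfl
    rw [this]
    exact ((contDiff_fst.sub ((contDiff_fst.pow 2).div_const 2)).sub
        ((h𝕍 r).comp contDiff_snd)).add
      ((contDiff_fst.sub ((h𝕫 r).comp contDiff_snd)).pow 2)
  · rw [Rev_TP zopt hzopt, Rev_TP zopt hzopt, hsum θ]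

/-! ### The two building blocks: strict transfer paths and the indifference loop -/

def 𝕍S (c θ : ℝ) : Fin 3 → ℝ := ![c + θ, -(c + θ), 0]
def Zc : Fin 3 → ℝ := ![1, 0, 1]

lemma sum_tax_S (c θ : ℝ) : TP (𝕍S c θ) Zc (Zc 0) 0 + TP (𝕍S c θ) Zc (Zc 1) 1
    + TP (𝕍S c θ) Zc (Zc 2) 2 = 1 := by
  simp [TP, 𝕍S, Zc]; ring

lemma tax0_S (c θ : ℝ) : TP (𝕍S c θ) Zc (Zc 0) 0 = 1/2 - (c + θ) := by
  simp [TP, 𝕍S, Zc]; ring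
lemma tax1_S (c θ : ℝ) : TP (𝕍S c θ) Zc (Zc 1) 1 = c + θ := by
  simp [TP, 𝕍S, Zc]
lemma tax2_S (c θ : ℝ) : TP (𝕍S c θ) Zc (Zc 2) 2 = 1/2 := by
  simp [TP, 𝕍S, Zc]; ring

def φmid (s : ℝ) : ℝ := Real.arccos (-2*Real.sqrt s)
def ψf (s θ : ℝ) : ℝ := φmid s + (Real.pi/2 - φmid s) * Real.smoothTransition (3*θ - 1)
def V0f (s θ : ℝ) : ℝ := Real.cos (ψf s θ)^2/4
def φf (s θ : ℝ) : ℝ := Real.pi*(1 - Real.smoothTransition (3*θ))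
  + ψf s θ * Real.smoothTransition (3*θ) + (Real.pi/2) * Real.smoothTransition (3*θ - 2)
def 𝕍4 (s θ : ℝ) : Fin 3 → ℝ := ![V0f s θ, -V0f s θ, 0]
def 𝕫4 (s θ : ℝ) : Fin 3 → ℝ := ![1, 1 + Real.cos (φf s θ), 1 + Real.sin (φf s θ)]

lemma contDiff_ψf (s : ℝ) : ContDiff ℝ 1 (ψf s) :=
  contDiff_const.add (contDiff_const.mul (Real.smoothTransition.contDiff.comp
    ((contDiff_const.mul contDiff_id).sub contDiff_const)))

lemma contDiff_V0f (s : ℝ) : ContDiff ℝ 1 (V0f s) :=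
  ((Real.contDiff_cos.comp (contDiff_ψf s)).pow 2).div_const 4

lemma contDiff_φf (s : ℝ) : ContDiff ℝ 1 (φf s) := by
  have h1 : ContDiff ℝ 1 (fun θ : ℝ => Real.smoothTransition (3*θ)) :=
    Real.smoothTransition.contDiff.comp (contDiff_const.mul contDiff_id)
  have h2 : ContDiff ℝ 1 (fun θ : ℝ => Real.smoothTransition (3*θ - 2)) :=
    Real.smoothTransition.contDiff.comp ((contDiff_const.mul contDiff_id).sub contDiff_const)
  exact ((contDiff_const.mul (contDiff_const.sub h1)).add
    ((contDiff_ψf s).mul h1)).add (contDiff_const.mul h2)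

lemma cos_φmid {s : ℝ} (h0 : 0 ≤ s) (h1 : s ≤ 1/4) : Real.cos (φmid s) = -2*Real.sqrt s := by
  have hs : Real.sqrt s ≤ 1/2 := by
    nlinarith [Real.sq_sqrt h0, Real.sqrt_nonneg s]
  exact Real.cos_arccos (by nlinarith [Real.sqrt_nonneg s]) (by nlinarith [Real.sqrt_nonneg s])

lemma ψf_of_le {s θ : ℝ} (h : θ ≤ 1/3) : ψf s θ = φmid s := by
  rw [ψf, Real.smoothTransition.zero_of_nonpos (by linarith), mul_zero, add_zero]

lemma ψf_of_ge {s θ : ℝ} (h : 2/3 ≤ θ) : ψf s θ = Real.pi/2 := by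
  rw [ψf, Real.smoothTransition.one_of_one_le (by linarith), mul_one]; ring

lemma V0f_of_le {s θ : ℝ} (h0 : 0 ≤ s) (h1 : s ≤ 1/4) (h : θ ≤ 1/3) : V0f s θ = s := by
  rw [V0f, ψf_of_le h, cos_φmid h0 h1]
  have := Real.sq_sqrt h0
  nlinarith [Real.sqrt_nonneg s]

lemma V0f_of_ge {s θ : ℝ} (h : 2/3 ≤ θ) : V0f s θ = 0 := by
  rw [V0f, ψf_of_ge h, Real.cos_pi_div_two]; norm_num

lemma φf_of_nonpos {s θ : ℝ} (h : θ ≤ 0) : φf s θ = Real.pi := by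
  rw [φf, Real.smoothTransition.zero_of_nonpos (by linarith),
    Real.smoothTransition.zero_of_nonpos (by linarith)]
  ring

lemma φf_of_ge_one {s θ : ℝ} (h : 1 ≤ θ) : φf s θ = Real.pi := by
  rw [φf, Real.smoothTransition.one_of_one_le (by linarith),
    Real.smoothTransition.one_of_one_le (by linarith), ψf_of_ge (by linarith)]
  ring

lemma φf_eq_ψf {s θ : ℝ} (h1 : 1/3 ≤ θ) (h2 : θ ≤ 2/3) : φf s θ = ψf s θ := by
  rw [φf, Real.smoothTransition.one_of_one_le (by linarith),
    Real.smoothTransition.zero_of_nonpos (by linarith)]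
  ring

lemma deriv_V0f_zero {s θ' : ℝ} (h0 : 0 ≤ s) (h1 : s ≤ 1/4)
    (h : θ' < 1/3 ∨ 2/3 < θ') : deriv (V0f s) θ' = 0 := by
  rcases h with h | h
  · have hev : V0f s =ᶠ[nhds θ'] fun _ => s := by
      filter_upwards [Iio_mem_nhds h] with θ hθ
      exact V0f_of_le h0 h1 (le_of_lt hθ)
    rw [hev.deriv_eq, deriv_const]
  · have hev : V0f s =ᶠ[nhds θ'] fun _ => 0 := by
      filter_upwards [Ioi_mem_nhds h] with θ hθ
      exact V0f_of_ge (le_of_lt hθ)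
    rw [hev.deriv_eq, deriv_const]

lemma tax0_4 (s θ : ℝ) : TP (𝕍4 s θ) (𝕫4 s θ) (𝕫4 s θ 0) 0 = 1/2 - V0f s θ := by
  simp [TP, 𝕍4, 𝕫4]; ring

lemma tax1_4 (s θ : ℝ) : TP (𝕍4 s θ) (𝕫4 s θ) (𝕫4 s θ 1) 1
    = 1/2 - Real.cos (φf s θ)^2/2 + V0f s θ := by
  simp [TP, 𝕍4, 𝕫4]; ring

lemma tax2_4 (s θ : ℝ) : TP (𝕍4 s θ) (𝕫4 s θ) (𝕫4 s θ 2) 2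
    = 1/2 - Real.sin (φf s θ)^2/2 := by
  simp [TP, 𝕍4, 𝕫4]; ring

lemma tax_eq_4 {s θ : ℝ} (h1 : 1/3 ≤ θ) (h2 : θ ≤ 2/3) :
    TP (𝕍4 s θ) (𝕫4 s θ) (𝕫4 s θ 1) 1 = TP (𝕍4 s θ) (𝕫4 s θ) (𝕫4 s θ 0) 0 := by
  rw [tax0_4, tax1_4, φf_eq_ψf h1 h2, V0f]
  ring

lemma sum_tax_4 (s θ : ℝ) : TP (𝕍4 s θ) (𝕫4 s θ) (𝕫4 s θ 0) 0
    + TP (𝕍4 s θ) (𝕫4 s θ) (𝕫4 s θ 1) 1 + TP (𝕍4 s θ) (𝕫4 s θ) (𝕫4 s θ 2) 2 = 1 := by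
  rw [tax0_4, tax1_4, tax2_4]
  nlinarith [Real.sin_sq_add_cos_sq (φf s θ)]

/-! ### The improvement step -/

lemma neg_integral_S (zopt : (ℝ → Fin 3 → ℝ) → ℝ → ℝ)
    (hzopt : ∀ T : ℝ → Fin 3 → ℝ, ∀ i : ℝ,
      (∃! z : ℝ, IsMaxOn (obj T i) univ z) → IsMaxOn (obj T i) univ (zopt T i))
    (g : ℝ → ℝ) (hg_mono : StrictMono g) {c : ℝ} (hc0 : 0 ≤ c) (hc1 : c < 1/4) :
    (∫ i in (0:ℝ)..1, gWt g zopt (TP (𝕍S c 0) Zc) i *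
        deriv (fun θ => TP (𝕍S c θ) Zc (zopt (TP (𝕍S c 0) Zc) i) (reg i)) 0) < 0 := by
  have hV : ∀ r : Fin 3, HasDerivAt (fun θ => 𝕍S c θ r)
      (![1, -1, 0] r) 0 := by
    intro r
    fin_cases r
    · exact (hasDerivAt_id 0).const_add c
    · exact ((hasDerivAt_id 0).const_add c).neg
    · exact hasDerivAt_const 0 0
  have hz : ∀ r : Fin 3, DifferentiableAt ℝ (fun θ : ℝ => Zc r) 0 :=
    fun r => differentiableAt_const _
  have e := INT zopt hzopt g (𝕍S c) (fun _ => Zc) 0 ![1, -1, 0] hV hz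
  beta_reduce at e
  rw [e, tax0_S, tax1_S, tax2_S]
  have hlt : g (c + 0) < g (1/2 - (c + 0)) := hg_mono (by linarith)
  simp only [Matrix.cons_val_zero, Matrix.cons_val_one, Matrix.head_cons,
    Matrix.cons_val_two, Matrix.tail_cons]
  linarith [hlt]

/-! ### Assembly -/

lemma cycle (zopt : (ℝ → Fin 3 → ℝ) → ℝ → ℝ)
    (hzopt : ∀ T : ℝ → Fin 3 → ℝ, ∀ i : ℝ,
      (∃! z : ℝ, IsMaxOn (obj T i) univ z) → IsMaxOn (obj T i) univ (zopt T i))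
    (g : ℝ → ℝ) (hg_mono : StrictMono g)
    (rel : (ℝ → Fin 3 → ℝ) → (ℝ → Fin 3 → ℝ) → Prop) (hrat : Rationalizes g zopt rel) :
    ∃ T₀ T₁ T₂ T₃ : ℝ → Fin 3 → ℝ,
      Rev zopt T₁ = Rev zopt T₀ ∧ Rev zopt T₂ = Rev zopt T₀ ∧ Rev zopt T₃ = Rev zopt T₀ ∧
      (rel T₀ T₁ ∧ ¬ rel T₁ T₀) ∧ (rel T₁ T₂ ∧ rel T₂ T₁) ∧
      (rel T₂ T₃ ∧ ¬ rel T₃ T₂) ∧ (rel T₃ T₀ ∧ rel T₀ T₃) := by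
  classical
  -- Step 1 : a strict improvement starting from T₀
  have path1 : IsPath zopt (-1) 2 (fun θ => TP (𝕍S 0 θ) Zc) := by
    refine isPath_TP zopt hzopt (𝕍S 0) (fun _ => Zc) ?_ (fun r => contDiff_const) ?_
    · intro r; fin_cases r
      · exact contDiff_const.add contDiff_id
      · exact (contDiff_const.add contDiff_id).neg
      · exact contDiff_const
    · intro θ; rw [sum_tax_S, sum_tax_S]
  have h1 := (hrat (-1) 2 (fun θ => TP (𝕍S 0 θ) Zc) path1).1.1
  beta_reduce at h1
  obtain ⟨θb₁, hθb₁, hall₁⟩ :=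
    h1 (neg_integral_S zopt hzopt g hg_mono le_rfl (by norm_num))
  have hθ₁pos : 0 < min (θb₁/2) (1/8) := lt_min (by linarith [hθb₁.1]) (by norm_num)
  have hθ₁lt : min (θb₁/2) (1/8) < θb₁ :=
    lt_of_le_of_lt (min_le_left _ _) (by linarith [hθb₁.1])
  have hθ₁8 : min (θb₁/2) (1/8) ≤ 1/8 := min_le_right _ _
  set θ₁ := min (θb₁/2) (1/8) with hθ₁def
  obtain ⟨h01, h10⟩ := hall₁ θ₁ ⟨hθ₁pos, hθ₁lt⟩
  -- Step 2 : trivial indifference at T₁ via the constant path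
  have path2 : IsPath zopt (-1) 2 (fun _ => TP (𝕍S 0 θ₁) Zc) :=
    isPath_TP zopt hzopt (fun _ => 𝕍S 0 θ₁) (fun _ => Zc)
      (fun r => contDiff_const) (fun r => contDiff_const) (fun θ => rfl)
  have h2 := (hrat (-1) 2 (fun _ => TP (𝕍S 0 θ₁) Zc) path2).2
  beta_reduce at h2
  obtain ⟨h12, h21⟩ := h2 (by
    intro θ' _
    have e := INT zopt hzopt g (fun _ => 𝕍S 0 θ₁) (fun _ => Zc) θ' (fun _ => 0)
      (fun r => hasDerivAt_const θ' _) (fun r => differentiableAt_const _)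
    beta_reduce at e
    rw [e]
    norm_num)
  -- Step 3 : a strict improvement starting from T₂ = T₁
  have path3 : IsPath zopt (-1) 2 (fun θ => TP (𝕍S θ₁ θ) Zc) := by
    refine isPath_TP zopt hzopt (𝕍S θ₁) (fun _ => Zc) ?_ (fun r => contDiff_const) ?_
    · intro r; fin_cases r
      · exact contDiff_const.add contDiff_id
      · exact (contDiff_const.add contDiff_id).neg
      · exact contDiff_const
    · intro θ; rw [sum_tax_S, sum_tax_S]
  have h3 := (hrat (-1) 2 (fun θ => TP (𝕍S θ₁ θ) Zc) path3).1.1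
  beta_reduce at h3
  obtain ⟨θb₃, hθb₃, hall₃⟩ :=
    h3 (neg_integral_S zopt hzopt g hg_mono (le_of_lt hθ₁pos) (by linarith [hθ₁8]))
  have hθ₃pos : 0 < min (θb₃/2) (1/8) := lt_min (by linarith [hθb₃.1]) (by norm_num)
  have hθ₃lt : min (θb₃/2) (1/8) < θb₃ :=
    lt_of_le_of_lt (min_le_left _ _) (by linarith [hθb₃.1])
  have hθ₃8 : min (θb₃/2) (1/8) ≤ 1/8 := min_le_right _ _
  set θ₃ := min (θb₃/2) (1/8) with hθ₃def
  obtain ⟨h23, h32⟩ := hall₃ θ₃ ⟨hθ₃pos, hθ₃lt⟩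
  have eT₁ : TP (𝕍S θ₁ 0) Zc = TP (𝕍S 0 θ₁) Zc := by
    have hv : 𝕍S θ₁ 0 = 𝕍S 0 θ₁ := by funext r; fin_cases r <;> simp [𝕍S]
    rw [hv]
  rw [eT₁] at h23 h32
  -- Step 4 : exact indifference between T₃ and T₀
  have hs0 : (0:ℝ) ≤ θ₁ + θ₃ := by linarith
  have hs4 : θ₁ + θ₃ ≤ 1/4 := by linarith
  have path4 : IsPath zopt (-1) 2 (fun θ => TP (𝕍4 (θ₁ + θ₃) θ) (𝕫4 (θ₁ + θ₃) θ)) := by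
    refine isPath_TP zopt hzopt (𝕍4 (θ₁ + θ₃)) (𝕫4 (θ₁ + θ₃)) ?_ ?_
      (fun θ => by rw [sum_tax_4, sum_tax_4])
    · intro r; fin_cases r
      · exact contDiff_V0f _
      · exact (contDiff_V0f _).neg
      · exact contDiff_const
    · intro r; fin_cases r
      · exact contDiff_const
      · exact contDiff_const.add (Real.contDiff_cos.comp (contDiff_φf _))
      · exact contDiff_const.add (Real.contDiff_sin.comp (contDiff_φf _))
  have h4 := (hrat (-1) 2 (fun θ => TP (𝕍4 (θ₁ + θ₃) θ) (𝕫4 (θ₁ + θ₃) θ)) path4).2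
  beta_reduce at h4
  obtain ⟨h30, h03⟩ := h4 (by
    intro θ' hθ'
    have hD : HasDerivAt (V0f (θ₁ + θ₃)) (deriv (V0f (θ₁ + θ₃)) θ') θ' :=
      ((contDiff_V0f _).differentiable one_ne_zero θ').hasDerivAt
    have hV : ∀ r : Fin 3, HasDerivAt (fun θ => 𝕍4 (θ₁ + θ₃) θ r)
        (![deriv (V0f (θ₁ + θ₃)) θ', -(deriv (V0f (θ₁ + θ₃)) θ'), 0] r) θ' := by
      intro r; fin_cases r
      · exact hD
      · exact hD.neg
      · exact hasDerivAt_const θ' 0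
    have hz : ∀ r : Fin 3, DifferentiableAt ℝ (fun θ => 𝕫4 (θ₁ + θ₃) θ r) θ' := by
      intro r; fin_cases r
      · exact differentiableAt_const 1
      · exact ((contDiff_const.add
          (Real.contDiff_cos.comp (contDiff_φf _))).differentiable one_ne_zero) θ'
      · exact ((contDiff_const.add
          (Real.contDiff_sin.comp (contDiff_φf _))).differentiable one_ne_zero) θ'
    have e := INT zopt hzopt g (𝕍4 (θ₁ + θ₃)) (𝕫4 (θ₁ + θ₃)) θ' _ hV hz
    beta_reduce at e
    rw [e]
    simp only [Matrix.cons_val_zero, Matrix.cons_val_one, Matrix.head_cons,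
      Matrix.cons_val_two, Matrix.tail_cons]
    by_cases hin : 1/3 ≤ θ' ∧ θ' ≤ 2/3
    · rw [tax_eq_4 hin.1 hin.2]; ring
    · have hD0 : deriv (V0f (θ₁ + θ₃)) θ' = 0 := by
        refine deriv_V0f_zero hs0 hs4 ?_
        rcases not_and_or.mp hin with h | h
        · exact Or.inl (lt_of_not_ge h)
        · exact Or.inr (lt_of_not_ge h)
      rw [hD0]; ring)
  have e40 : TP (𝕍4 (θ₁ + θ₃) 0) (𝕫4 (θ₁ + θ₃) 0) = TP (𝕍S θ₁ θ₃) Zc := by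
    have hv : 𝕍4 (θ₁ + θ₃) 0 = 𝕍S θ₁ θ₃ := by
      funext r; fin_cases r <;>
        simp [𝕍4, 𝕍S, V0f_of_le hs0 hs4 (by norm_num : (0:ℝ) ≤ 1/3)]
    have hz : 𝕫4 (θ₁ + θ₃) 0 = Zc := by
      funext r; fin_cases r <;>
        simp [𝕫4, Zc, φf_of_nonpos (le_refl (0:ℝ)), Real.cos_pi, Real.sin_pi]
    rw [hv, hz]
  have e41 : TP (𝕍4 (θ₁ + θ₃) 1) (𝕫4 (θ₁ + θ₃) 1) = TP (𝕍S 0 0) Zc := by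
    have hv : 𝕍4 (θ₁ + θ₃) 1 = 𝕍S 0 0 := by
      funext r; fin_cases r <;>
        simp [𝕍4, 𝕍S, V0f_of_ge (by norm_num : (2:ℝ)/3 ≤ 1)]
    have hz : 𝕫4 (θ₁ + θ₃) 1 = Zc := by
      funext r; fin_cases r <;>
        simp [𝕫4, Zc, φf_of_ge_one (le_refl (1:ℝ)), Real.cos_pi, Real.sin_pi]
    rw [hv, hz]
  rw [e40, e41] at h30 h03
  have hrev : ∀ c θ : ℝ, Rev zopt (TP (𝕍S c θ) Zc) = 1/3 := by
    intro c θ; rw [Rev_TP zopt hzopt, sum_tax_S]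
  exact ⟨TP (𝕍S 0 0) Zc, TP (𝕍S 0 θ₁) Zc, TP (𝕍S 0 θ₁) Zc, TP (𝕍S θ₁ θ₃) Zc,
    by rw [hrev, hrev], by rw [hrev, hrev], by rw [hrev, hrev],
    ⟨h01, h10⟩, ⟨h12, h21⟩, ⟨h23, h32⟩, ⟨h30, h03⟩⟩


/-- **Proposition (Sher 2021, Proposition `simple contradiction proposition`).**  In the
three-region example with common libertarian weights `g_i(c,z) = g(z−c)`, `g` positive
and strictly increasing, no preorder rationalizes `g`; moreover any binary relation
that rationalizes `g` contains a cycle `T₀ ≺ T₁ ∼ T₂ ≺ T₃ ∼ T₀` among four tax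
policies raising the same revenue. -/
theorem stmt5
    -- optimal incomes: wherever agent `i` has a unique maximizer, `zopt` selects it
    (zopt : (ℝ → Fin 3 → ℝ) → ℝ → ℝ)
    (hzopt : ∀ T : ℝ → Fin 3 → ℝ, ∀ i : ℝ,
      (∃! z : ℝ, IsMaxOn (obj T i) univ z) → IsMaxOn (obj T i) univ (zopt T i))
    -- the libertarian welfare weights, identical across agents
    (g : ℝ → ℝ) (hg_pos : ∀ t, 0 < g t) (hg_mono : StrictMono g) :
    (¬ ∃ rel : (ℝ → Fin 3 → ℝ) → (ℝ → Fin 3 → ℝ) → Prop,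
      Reflexive rel ∧ Transitive rel ∧ Rationalizes g zopt rel) ∧
    (∀ rel : (ℝ → Fin 3 → ℝ) → (ℝ → Fin 3 → ℝ) → Prop, Rationalizes g zopt rel →
      ∃ T₀ T₁ T₂ T₃ : ℝ → Fin 3 → ℝ,
        Rev zopt T₁ = Rev zopt T₀ ∧ Rev zopt T₂ = Rev zopt T₀ ∧ Rev zopt T₃ = Rev zopt T₀ ∧
        (rel T₀ T₁ ∧ ¬ rel T₁ T₀) ∧ (rel T₁ T₂ ∧ rel T₂ T₁) ∧
        (rel T₂ T₃ ∧ ¬ rel T₃ T₂) ∧ (rel T₃ T₀ ∧ rel T₀ T₃)) := by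
  constructor
  · rintro ⟨rel, _, htrans, hrat⟩
    obtain ⟨T₀, T₁, T₂, T₃, _, _, _, ⟨h01, h10⟩, ⟨h12, _⟩, ⟨h23, _⟩, ⟨h30, _⟩⟩ :=
      cycle zopt hzopt g hg_mono rel hrat
    exact h10 (htrans h12 (htrans h23 h30))
  · exact fun rel hrat => cycle zopt hzopt g hg_mono rel hrat

end Stmt5
end
end
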